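/- arXiv:2603.07877 — 3 statements merged into one kernel-verified Lean document; each statement's English description precedes it below -/
import Mathlib

section
/- Jung's theorem: any compact set K ⊂ ℝ^{n} with diameter d is contained in a closed ball of radius r ≤ d·√(n/(2(n+1))). -/
open Metric MeasureTheory RealInnerProductSpace

section Aux

variable {E : Type*} [NormedAddCommGroup E] [InnerProductSpace ℝ E]

/-- Key quadratic identity: for weights summing to 1 with barycenter `p`,
the weighted sum of squared pairwise distances equals twice the weighted
sum of squared distances to `p`. -/
lemma jung_key_identity (t : Finset E) (w : E → ℝ) (hw : ∑ y ∈ t, w y = 1) :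
    ∑ y ∈ t, ∑ z ∈ t, w y * w z * ‖y - z‖ ^ 2
      = 2 * ∑ y ∈ t, w y * ‖y - (∑ z ∈ t, w z • z)‖ ^ 2 := by
  set p : E := ∑ z ∈ t, w z • z with hp
  have hzero : ∑ y ∈ t, w y • (y - p) = 0 := by
    simp only [smul_sub, Finset.sum_sub_distrib, ← Finset.sum_smul, hw, one_smul]
    simp [hp]
  have hstep : ∀ y ∈ t, ∑ z ∈ t, w y * w z * ‖y - z‖ ^ 2
      = (∑ z ∈ t, w z) * (w y * ‖y - p‖ ^ 2) + w y * ∑ z ∈ t, w z * ‖z - p‖ ^ 2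
        - 2 * (w y * ⟪y - p, (0 : E)⟫) := by
    intro y hy
    rw [← hzero, inner_sum]
    simp only [real_inner_smul_right, Finset.sum_mul, Finset.mul_sum,
      ← Finset.sum_sub_distrib, ← Finset.sum_add_distrib]
    refine Finset.sum_congr rfl fun z hz => ?_
    have : y - z = (y - p) - (z - p) := (sub_sub_sub_cancel_right y z p).symm
    rw [this, norm_sub_sq_real]
    ring
  rw [Finset.sum_congr rfl hstep]
  simp only [inner_zero_right, mul_zero, sub_zero, hw, one_mul]
  rw [Finset.sum_add_distrib, ← Finset.sum_mul, hw, one_mul]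
  ring

end Aux

set_option maxHeartbeats 1000000 in
/-- Jung's theorem: any nonempty compact set `K ⊆ ℝ^n` of diameter `d` is contained in a
closed ball of radius `d·√(n/(2(n+1)))`. -/
theorem stmt4 (n : ℕ) (hn : 1 ≤ n) (K : Set (EuclideanSpace ℝ (Fin n)))
    (hKne : K.Nonempty) (hK : IsCompact K) (d : ℝ) (hd : d = Metric.diam K) :
    ∃ c : EuclideanSpace ℝ (Fin n),
      K ⊆ Metric.closedBall c (d * Real.sqrt (n / (2 * (n + 1)))) := by
  classical
  obtain ⟨x0, hx0⟩ := hKne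
  have hd0 : 0 ≤ d := hd ▸ Metric.diam_nonneg
  have hdist_le_d : ∀ x ∈ K, ∀ y ∈ K, dist x y ≤ d := fun x hx y hy =>
    hd ▸ Metric.dist_le_diam_of_mem hK.isBounded hx hy
  -- the "sup distance" function
  set F := fun c : EuclideanSpace ℝ (Fin n) => sSup ((fun x => dist x c) '' K) with hF
  have hFatt : ∀ c : EuclideanSpace ℝ (Fin n), ∃ x ∈ K, F c = dist x c := fun c =>
    hK.exists_sSup_image_eq ⟨x0, hx0⟩ (Continuous.continuousOn (by fun_prop))
  have hFle : ∀ c : EuclideanSpace ℝ (Fin n), ∀ x ∈ K, dist x c ≤ F c := by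
    intro c x hx
    have hbdd : BddAbove ((fun x => dist x c) '' K) :=
      (hK.image (by fun_prop)).bddAbove
    exact le_csSup hbdd ⟨x, hx, rfl⟩
  have hFlip : ∀ a b : EuclideanSpace ℝ (Fin n), F a ≤ F b + dist a b := by
    intro a b
    refine csSup_le (⟨dist x0 a, x0, hx0, rfl⟩) ?_
    rintro _ ⟨x, hx, rfl⟩
    calc dist x a ≤ dist x b + dist b a := dist_triangle _ _ _
      _ ≤ F b + dist a b := by rw [dist_comm b a]; exact add_le_add_left (hFle b x hx) _
  have hFcont : Continuous F := by
    refine (LipschitzWith.of_dist_le_mul (K := 1) fun a b => ?_).continuous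
    rw [Real.dist_eq, NNReal.coe_one, one_mul, abs_sub_le_iff]
    have h1 := hFlip a b
    have h2 := hFlip b a
    have h3 : dist b a = dist a b := dist_comm b a
    constructor <;> linarith
  -- minimize F over a large ball
  obtain ⟨c, hcB, hcmin⟩ : ∃ c ∈ Metric.closedBall x0 (d + 1),
      IsMinOn F (Metric.closedBall x0 (d + 1)) c :=
    (isCompact_closedBall x0 (d + 1)).exists_isMinOn
      ⟨x0, Metric.mem_closedBall_self (by linarith)⟩ hFcont.continuousOn
  set r : ℝ := F c with hr
  obtain ⟨xs, hxs, hxsr⟩ := hFatt c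
  have hr0 : 0 ≤ r := by rw [hr, hxsr]; exact dist_nonneg
  have hrd : r ≤ d := by
    have h1 : F c ≤ F x0 := hcmin (Metric.mem_closedBall_self (by linarith))
    obtain ⟨x1, hx1, hx1e⟩ := hFatt x0
    calc r ≤ F x0 := h1
      _ = dist x1 x0 := hx1e
      _ ≤ d := hdist_le_d x1 hx1 x0 hx0
  have hcx0 : dist x0 c ≤ r := hFle c x0 hx0
  -- the set of farthest points
  set M := {x ∈ K | dist x c = r} with hM
  have hMK : M ⊆ K := fun x hx => hx.1
  have hMne : M.Nonempty := ⟨xs, hxs, hxsr.symm⟩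
  -- c lies in the closure of the convex hull of M
  have hcM : c ∈ closure (convexHull ℝ M) := by
    by_contra hc
    obtain ⟨g, u, hgc, hgM⟩ := geometric_hahn_banach_point_closed
      ((convex_convexHull ℝ M).closure) isClosed_closure hc
    have hgM' : ∀ y ∈ M, u < g y := fun y hy =>
      hgM y (subset_closure (subset_convexHull ℝ M hy))
    set v := (InnerProductSpace.toDual ℝ (EuclideanSpace ℝ (Fin n))).symm g with hv
    have hvg : ∀ x : EuclideanSpace ℝ (Fin n), ⟪v, x⟫ = g x := fun x => InnerProductSpace.toDual_symm_apply
    have hvne : v ≠ 0 := by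
      intro h0
      obtain ⟨y, hy⟩ := hMne
      have h1 := hvg y
      have h2 := hvg c
      rw [h0, inner_zero_left] at h1 h2
      have := hgM' y hy
      linarith
    have hvpos : 0 < ‖v‖ := norm_pos_iff.mpr hvne
    set ε : ℝ := u - g c with hε
    have hεpos : 0 < ε := by simp [hε]; linarith
    -- points of K on the far side of the hyperplane are strictly closer to c
    have hδ : ∃ δ > 0, ∀ x ∈ K, g x ≤ u → dist x c ≤ r - δ := by
      set K1 := K ∩ {x | g x ≤ u} with hK1
      have hK1c : IsCompact K1 :=
        hK.inter_right (isClosed_le g.continuous continuous_const)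
      rcases K1.eq_empty_or_nonempty with hK1e | hK1ne
      · refine ⟨1, one_pos, fun x hx hgx => ?_⟩
        exact absurd (show x ∈ K1 from ⟨hx, hgx⟩) (by simp [hK1e])
      · obtain ⟨x1, hx1, hx1max⟩ := hK1c.exists_isMaxOn hK1ne
          (Continuous.continuousOn (by fun_prop) : ContinuousOn (fun x => dist x c) _)
        have hx1K : x1 ∈ K := hx1.1
        have hx1lt : dist x1 c < r := by
          rcases lt_or_eq_of_le (hFle c x1 hx1K) with h | h
          · exact h
          · exact absurd (hgM' x1 ⟨hx1K, h⟩) (not_lt.mpr hx1.2)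
        refine ⟨r - dist x1 c, by linarith, fun x hx hgx => ?_⟩
        have := hx1max (Set.mem_inter hx hgx)
        simp only [Set.mem_setOf_eq] at this
        linarith [this]
    obtain ⟨δ, hδpos, hδ⟩ := hδ
    set t : ℝ := min (δ / (2 * ‖v‖)) (min (ε / ‖v‖ ^ 2) (1 / ‖v‖)) with ht
    have htpos : 0 < t := by
      refine lt_min (by positivity) (lt_min (by positivity) (by positivity))
    have htv1 : t * ‖v‖ ≤ 1 := by
      have : t ≤ 1 / ‖v‖ := le_trans (min_le_right _ _) (min_le_right _ _)
      calc t * ‖v‖ ≤ (1 / ‖v‖) * ‖v‖ := by nlinarith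
        _ = 1 := by field_simp
    have htvδ : t * ‖v‖ ≤ δ / 2 := by
      have : t ≤ δ / (2 * ‖v‖) := min_le_left _ _
      calc t * ‖v‖ ≤ (δ / (2 * ‖v‖)) * ‖v‖ := by nlinarith
        _ = δ / 2 := by field_simp
    have htvε : t * ‖v‖ ^ 2 ≤ ε := by
      have h1 : t ≤ ε / ‖v‖ ^ 2 := le_trans (min_le_right _ _) (min_le_left _ _)
      calc t * ‖v‖ ^ 2 ≤ (ε / ‖v‖ ^ 2) * ‖v‖ ^ 2 := by nlinarith
        _ = ε := by field_simp
    set c' := c + t • v with hc'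
    have hcc' : dist c c' = t * ‖v‖ := by
      rw [dist_eq_norm, hc']
      simp [norm_smul, abs_of_pos htpos]
    have hc'B : c' ∈ Metric.closedBall x0 (d + 1) := by
      rw [Metric.mem_closedBall]
      calc dist c' x0 ≤ dist c' c + dist c x0 := dist_triangle _ _ _
        _ = t * ‖v‖ + dist x0 c := by rw [dist_comm c' c, hcc', dist_comm c x0]
        _ ≤ 1 + d := by linarith
        _ = d + 1 := by ring
    have hlt : ∀ x ∈ K, dist x c' < r := by
      intro x hx
      rcases le_or_gt (g x) u with hgx | hgx
      · calc dist x c' ≤ dist x c + dist c c' := dist_triangle _ _ _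
          _ ≤ (r - δ) + δ / 2 := add_le_add (hδ x hx hgx) (hcc' ▸ htvδ)
          _ < r := by linarith
      · have hsq : dist x c' ^ 2 < r ^ 2 := by
          have hexp : dist x c' ^ 2
              = ‖x - c‖ ^ 2 - 2 * (t * ⟪x - c, v⟫) + t ^ 2 * ‖v‖ ^ 2 := by
            rw [dist_eq_norm, hc', show x - (c + t • v) = (x - c) - t • v by abel,
              norm_sub_sq_real, real_inner_smul_right, norm_smul]
            rw [Real.norm_eq_abs, abs_of_pos htpos]
            ring
          have hinner : ε < ⟪x - c, v⟫ := by
            rw [real_inner_comm, inner_sub_right, hvg x, hvg c]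
            simp only [hε]
            linarith
          have hxc : ‖x - c‖ ^ 2 ≤ r ^ 2 := by
            have h1 : ‖x - c‖ ≤ r := by rw [← dist_eq_norm]; exact hFle c x hx
            exact pow_le_pow_left₀ (norm_nonneg _) h1 2
          have ht2 : t ^ 2 * ‖v‖ ^ 2 ≤ t * ε := by
            calc t ^ 2 * ‖v‖ ^ 2 = t * (t * ‖v‖ ^ 2) := by ring
              _ ≤ t * ε := by nlinarith
          nlinarith
        exact lt_of_pow_lt_pow_left₀ 2 hr0 hsq
    obtain ⟨x', hx', hx'e⟩ := hFatt c'
    have : F c' < r := hx'e ▸ hlt x' hx'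
    exact absurd (hcmin hc'B) (not_le.mpr this)
  -- main inequality: 2 r^2 ≤ d^2 * n / (n+1)
  have hmain : 2 * r ^ 2 ≤ d ^ 2 * (1 - 1 / (n + 1)) := by
    refine le_of_forall_pos_le_add fun ε hεpos => ?_
    -- choose an approximation p of c in the convex hull of M
    have hrpos : 0 ≤ r := hr0
    set η : ℝ := min r (ε / (4 * r + 1)) with hη
    rcases eq_or_lt_of_le hr0 with hr0' | hrpos'
    · -- r = 0 : trivial
      rw [← hr0']
      have : (0:ℝ) ≤ d ^ 2 * (1 - 1 / (n + 1)) := by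
        have h1 : (1:ℝ) ≤ n + 1 := by
          have : (1:ℝ) ≤ n := by exact_mod_cast hn
          linarith
        have : 1 / ((n:ℝ) + 1) ≤ 1 := by
          rw [div_le_one (by linarith)]; linarith
        nlinarith
      nlinarith
    have hηpos : 0 < η := lt_min hrpos' (by positivity)
    obtain ⟨p, hpM, hpc⟩ := Metric.mem_closure_iff.mp hcM η hηpos
    -- Carathéodory
    rw [convexHull_eq_union] at hpM
    simp only [Set.mem_iUnion] at hpM
    obtain ⟨t, htM, hai, hpt⟩ := hpM
    have hcard : t.card ≤ n + 1 := by
      have h1 := hai.card_le_finrank_succ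
      rw [Fintype.card_coe] at h1
      refine h1.trans ?_
      have h2 : Module.finrank ℝ (vectorSpan ℝ (Set.range (Subtype.val : t → EuclideanSpace ℝ (Fin n))))
          ≤ Module.finrank ℝ (EuclideanSpace ℝ (Fin n)) := Submodule.finrank_le _
      have h3 : Module.finrank ℝ (EuclideanSpace ℝ (Fin n)) = n := finrank_euclideanSpace_fin
      omega
    rw [Finset.convexHull_eq] at hpt
    obtain ⟨w, hw0, hw1, hwc⟩ := hpt
    rw [Finset.centerMass_eq_of_sum_1 _ _ hw1] at hwc
    simp only [id_eq] at hwc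
    have htne : t.Nonempty := by
      rcases t.eq_empty_or_nonempty with h | h
      · rw [h] at hw1; simp at hw1
      · exact h
    -- distances from points of t to p
    have hdistp : ∀ y ∈ t, r - η ≤ ‖y - p‖ := by
      intro y hy
      have hyM : y ∈ M := htM hy
      have h1 : dist y c = r := hyM.2
      have h2 : dist y c ≤ dist y p + dist p c := dist_triangle _ _ _
      rw [← dist_eq_norm]
      have : dist c p < η := hpc
      rw [dist_comm p c] at h2
      linarith [h1 ▸ h2]
    -- lower bound
    have hlow : 2 * (r - η) ^ 2 ≤ ∑ y ∈ t, ∑ z ∈ t, w y * w z * ‖y - z‖ ^ 2 := by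
      rw [jung_key_identity t w hw1, hwc]
      have : (r - η) ^ 2 = ∑ y ∈ t, w y * (r - η) ^ 2 := by
        rw [← Finset.sum_mul, hw1, one_mul]
      rw [mul_le_mul_iff_right₀ (by norm_num : (0:ℝ) < 2), this]
      refine Finset.sum_le_sum fun y hy => ?_
      have h1 : r - η ≤ ‖y - p‖ := hdistp y hy
      have h2 : 0 ≤ r - η := by
        have : η ≤ r := min_le_left _ _
        linarith
      have := pow_le_pow_left₀ h2 h1 2
      nlinarith [hw0 y hy]
    -- upper bound
    have hsumsq : 1 / ((n:ℝ) + 1) ≤ ∑ y ∈ t, w y ^ 2 := by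
      have h1 : ((∑ y ∈ t, w y) ^ 2 : ℝ) ≤ t.card * ∑ y ∈ t, w y ^ 2 :=
        sq_sum_le_card_mul_sum_sq
      rw [hw1, one_pow] at h1
      have hcard' : (t.card : ℝ) ≤ (n : ℝ) + 1 := by exact_mod_cast hcard
      have hcardpos : 0 < (t.card : ℝ) := by
        exact_mod_cast Finset.card_pos.mpr htne
      have hsq0 : 0 ≤ ∑ y ∈ t, w y ^ 2 := Finset.sum_nonneg fun y _ => sq_nonneg _
      rw [div_le_iff₀ (by linarith : (0:ℝ) < (n:ℝ) + 1)]
      calc (1:ℝ) ≤ t.card * ∑ y ∈ t, w y ^ 2 := h1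
        _ ≤ ((n:ℝ) + 1) * ∑ y ∈ t, w y ^ 2 := by nlinarith
        _ = (∑ y ∈ t, w y ^ 2) * ((n:ℝ) + 1) := by ring
    have hup : ∑ y ∈ t, ∑ z ∈ t, w y * w z * ‖y - z‖ ^ 2
        ≤ d ^ 2 * (1 - ∑ y ∈ t, w y ^ 2) := by
      have hyb : ∀ y ∈ t, ∑ z ∈ t, w y * w z * ‖y - z‖ ^ 2
          ≤ w y * (d ^ 2 * (1 - w y)) := by
        intro y hy
        have hy' : ∑ z ∈ t, w y * w z * ‖y - z‖ ^ 2
            = w y * ∑ z ∈ t, w z * ‖y - z‖ ^ 2 := by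
          rw [Finset.mul_sum]; refine Finset.sum_congr rfl fun z _ => by ring
        rw [hy']
        refine mul_le_mul_of_nonneg_left ?_ (hw0 y hy)
        have hsplit : ∑ z ∈ t, w z * ‖y - z‖ ^ 2
            = ∑ z ∈ t.erase y, w z * ‖y - z‖ ^ 2 := by
          rw [← Finset.sum_erase_add t _ hy]
          simp
        rw [hsplit]
        have herase : ∑ z ∈ t.erase y, w z * ‖y - z‖ ^ 2
            ≤ ∑ z ∈ t.erase y, w z * d ^ 2 := by
          refine Finset.sum_le_sum fun z hz => ?_
          have hz' : z ∈ t := Finset.mem_of_mem_erase hz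
          have hyz : ‖y - z‖ ≤ d := by
            rw [← dist_eq_norm]
            exact hdist_le_d y (hMK (htM hy)) z (hMK (htM hz'))
          have := pow_le_pow_left₀ (norm_nonneg _) hyz 2
          nlinarith [hw0 z hz']
        refine herase.trans ?_
        rw [← Finset.sum_mul]
        have hsum_erase : ∑ z ∈ t.erase y, w z = 1 - w y := by
          have := Finset.sum_erase_add t w hy
          linarith [this.symm ▸ hw1]
        exact le_of_eq (by rw [hsum_erase]; ring)
      calc ∑ y ∈ t, ∑ z ∈ t, w y * w z * ‖y - z‖ ^ 2
          ≤ ∑ y ∈ t, w y * (d ^ 2 * (1 - w y)) := Finset.sum_le_sum hyb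
        _ = d ^ 2 * (∑ y ∈ t, w y) - d ^ 2 * ∑ y ∈ t, w y ^ 2 := by
            rw [Finset.mul_sum, Finset.mul_sum, ← Finset.sum_sub_distrib]
            refine Finset.sum_congr rfl fun y _ => by ring
        _ = d ^ 2 * (1 - ∑ y ∈ t, w y ^ 2) := by rw [hw1]; ring
    have hfinal : 2 * (r - η) ^ 2 ≤ d ^ 2 * (1 - 1 / (n + 1)) := by
      refine hlow.trans (hup.trans ?_)
      have hd2 : (0:ℝ) ≤ d ^ 2 := sq_nonneg _
      nlinarith [hsumsq]
    -- conclude with the ε-slack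
    have hηr : η ≤ r := min_le_left _ _
    have hηε : η ≤ ε / (4 * r + 1) := min_le_right _ _
    have h4 : 4 * r * η ≤ ε := by
      have h5 : 0 < 4 * r + 1 := by linarith
      calc 4 * r * η ≤ (4 * r + 1) * η := by nlinarith
        _ ≤ (4 * r + 1) * (ε / (4 * r + 1)) := by nlinarith
        _ = ε := by field_simp
    nlinarith [sq_nonneg η]
  -- wrap up
  refine ⟨c, fun x hx => ?_⟩
  rw [Metric.mem_closedBall]
  have h1 : dist x c ≤ r := hFle c x hx
  refine h1.trans ?_
  have hfrac : (0:ℝ) ≤ (n:ℝ) / (2 * (n + 1)) := by positivity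
  have hR2 : r ^ 2 ≤ (d * Real.sqrt ((n:ℝ) / (2 * (n + 1)))) ^ 2 := by
    rw [mul_pow, Real.sq_sqrt hfrac]
    have h2 : d ^ 2 * (1 - 1 / ((n:ℝ) + 1)) = d ^ 2 * ((n:ℝ) / (n + 1)) := by
      congr 1
      field_simp
      ring
    rw [h2] at hmain
    have h3 : d ^ 2 * ((n:ℝ) / (2 * (n + 1))) = d ^ 2 * ((n:ℝ) / (n + 1)) / 2 := by
      have hne : ((n:ℝ) + 1) ≠ 0 := by positivity
      field_simp
    rw [h3]
    linarith
  have hRnn : 0 ≤ d * Real.sqrt ((n:ℝ) / (2 * (n + 1))) := by positivity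
  calc r = Real.sqrt (r ^ 2) := (Real.sqrt_sq hr0).symm
    _ ≤ Real.sqrt ((d * Real.sqrt ((n:ℝ) / (2 * (n + 1)))) ^ 2) := Real.sqrt_le_sqrt hR2
    _ = d * Real.sqrt ((n:ℝ) / (2 * (n + 1))) := Real.sqrt_sq hRnn
end

section
/- Cone area bound: let B ⊂ ℝ^{N+1} be a compact set contained in the closed ball of radius h centered at the origin, with ℋ^l(B) < ∞. Define the cone V = {t·x : x ∈ B, t ∈ [0,1]}. Then ℋ^{l+1}(V) ≤ C·h·ℋ^l(B) for a constant C depending only l and N. -/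
open Metric MeasureTheory Set Filter Topology ENNReal

/-- Covering the truncated cone over a small set by geometric bands. -/
lemma coneCover {E : Type*} [NormedAddCommGroup E] [NormedSpace ℝ E]
    (m : ℕ) (hm : 1 ≤ m) (h σ : ℝ) (hh : 0 < h) (hσ : 0 < σ) (hσh : σ ≤ h)
    (U : Set E) (hU : U ⊆ Metric.closedBall 0 h) :
    ∃ W : ℕ → Set E,
      ({y | ∃ x ∈ U, ∃ t ∈ Set.Icc (0:ℝ) 1, y = t • x} ⊆ ⋃ k, W k) ∧
      (∀ k, EMetric.diam (W k) ≤ ENNReal.ofReal (2 * (Metric.diam U + σ))) ∧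
      (∑' k, EMetric.diam (W k) ^ ((m:ℝ)+1) ≤
        ENNReal.ofReal (2^(m+3) * h * (Metric.diam U + σ)^m)) := by
  set δ := Metric.diam U with hδdef
  have hδ0 : 0 ≤ δ := Metric.diam_nonneg
  have hδ2h : δ ≤ 2 * h := by
    calc δ ≤ Metric.diam (Metric.closedBall (0:E) h) :=
          Metric.diam_mono hU (Metric.isBounded_closedBall)
      _ ≤ 2 * h := Metric.diam_closedBall hh.le
  have hP : 0 < δ + σ := by positivity
  set β := min ((δ + σ)/h) 1 with hβdef
  have hβ0 : 0 < β := lt_min (by positivity) one_pos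
  have hβ1 : β ≤ 1 := min_le_right _ _
  set θ := 1 - β with hθdef
  have hθ0 : 0 ≤ θ := by simp [hθdef]; linarith
  have hθ1 : θ < 1 := by simp [hθdef]; linarith
  have hβh : β * h ≤ δ + σ := by
    have : β ≤ (δ + σ)/h := min_le_left _ _
    calc β * h ≤ ((δ+σ)/h) * h := by nlinarith
      _ = δ + σ := by field_simp
  set W : ℕ → Set E := fun k =>
    Nat.rec ({0} : Set E)
      (fun k _ => {y | ∃ x ∈ U, ∃ t ∈ Set.Icc (θ^(k+1)) (θ^k), y = t • x}) k with hWdef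
  have hW0 : W 0 = {0} := rfl
  have hWs : ∀ k, W (k+1) = {y | ∃ x ∈ U, ∃ t ∈ Set.Icc (θ^(k+1)) (θ^k), y = t • x} :=
    fun k => rfl
  -- diameter bound for the bands
  have hdiamk : ∀ k, EMetric.diam (W (k+1)) ≤ ENNReal.ofReal (2 * (δ + σ) * θ^k) := by
    intro k
    rw [hWs]
    apply EMetric.diam_le
    rintro a ⟨x, hx, t, ⟨ht1, ht2⟩, rfl⟩ b ⟨y, hy, s, ⟨hs1, hs2⟩, rfl⟩
    rw [edist_dist]
    apply ENNReal.ofReal_le_ofReal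
    have hxy : dist x y ≤ δ :=
      hδdef ▸ Metric.dist_le_diam_of_mem (isBounded_closedBall.subset hU) hx hy
    have hyn : ‖y‖ ≤ h := mem_closedBall_zero_iff.1 (hU hy)
    have ht0 : 0 ≤ t := le_trans (pow_nonneg hθ0 _) ht1
    have key : t • x - s • y = t • (x - y) + (t - s) • y := by
      rw [smul_sub, sub_smul]; abel
    have hts : |t - s| ≤ θ^k - θ^(k+1) := abs_sub_le_iff.2 ⟨by linarith, by linarith⟩
    calc dist (t • x) (s • y) = ‖t • (x - y) + (t - s) • y‖ := by rw [dist_eq_norm, key]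
      _ ≤ ‖t • (x - y)‖ + ‖(t - s) • y‖ := norm_add_le _ _
      _ = |t| * ‖x - y‖ + |t - s| * ‖y‖ := by
          rw [norm_smul, norm_smul, Real.norm_eq_abs, Real.norm_eq_abs]
      _ ≤ θ^k * δ + (θ^k - θ^(k+1)) * h := by
          apply add_le_add
          · exact mul_le_mul (by rwa [abs_of_nonneg ht0]) (by rwa [← dist_eq_norm])
              (norm_nonneg _) (pow_nonneg hθ0 _)
          · exact mul_le_mul hts hyn (norm_nonneg _)
              (by have := pow_le_pow_of_le_one hθ0 hθ1.le (Nat.le_succ k); linarith)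
      _ ≤ 2 * (δ + σ) * θ^k := by
          have h1 : θ^k - θ^(k+1) = θ^k * β := by rw [pow_succ, hθdef]; ring
          rw [h1]
          have hp := pow_nonneg hθ0 k
          nlinarith
  refine ⟨W, ?_, ?_, ?_⟩
  · -- coverage
    rintro y ⟨x, hx, t, ⟨ht0, ht1⟩, rfl⟩
    rcases eq_or_lt_of_le ht0 with h0 | h0
    · exact Set.mem_iUnion.2 ⟨0, by simp [hW0, ← h0]⟩
    · have hex : ∃ k, θ^(k+1) < t := by
        obtain ⟨k, hk⟩ := ((tendsto_pow_atTop_nhds_zero_of_lt_one hθ0 hθ1).eventually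
          (gt_mem_nhds h0)).exists
        exact ⟨k, lt_of_le_of_lt (pow_le_pow_of_le_one hθ0 hθ1.le (Nat.le_succ k)) hk⟩
      set k := Nat.find hex with hkdef
      have hk1 : θ^(k+1) < t := Nat.find_spec hex
      have hk2 : t ≤ θ^k := by
        rcases Nat.eq_zero_or_pos k with h | h
        · simpa [h] using ht1
        · have := Nat.find_min hex (m := k - 1) (by omega)
          have : ¬ θ^(k-1+1) < t := this
          have hkk : k - 1 + 1 = k := by omega
          rw [hkk] at this
          linarith
      exact Set.mem_iUnion.2 ⟨k+1, by rw [hWs]; exact ⟨x, hx, t, ⟨hk1.le, hk2⟩, rfl⟩⟩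
  · -- uniform diameter bound
    intro k
    cases k with
    | zero => rw [hW0]; simp [EMetric.diam]
    | succ k =>
        refine (hdiamk k).trans (ENNReal.ofReal_le_ofReal ?_)
        have hp0 := pow_nonneg hθ0 k
        have hp1 : θ^k ≤ 1 := pow_le_one₀ hθ0 hθ1.le
        nlinarith
  · -- sum bound
    have he0 : (0:ℝ) ≤ (m:ℝ)+1 := by positivity
    have hq0 : 0 ≤ θ^(m+1) := pow_nonneg hθ0 _
    have hq1 : θ^(m+1) < 1 := pow_lt_one₀ hθ0 hθ1 (Nat.succ_ne_zero m)
    rw [tsum_eq_zero_add' (f := fun k => EMetric.diam (W k) ^ ((m:ℝ)+1)) ENNReal.summable]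
    have h0 : EMetric.diam (W 0) ^ ((m:ℝ)+1) = 0 := by
      rw [hW0, EMetric.diam, EMetric.diam_singleton, ENNReal.zero_rpow_of_pos (by positivity)]
    rw [h0, zero_add]
    calc ∑' k, EMetric.diam (W (k+1)) ^ ((m:ℝ)+1)
        ≤ ∑' k, ENNReal.ofReal ((2 * (δ + σ))^(m+1) * (θ^(m+1))^k) := by
          apply ENNReal.tsum_le_tsum
          intro k
          calc EMetric.diam (W (k+1)) ^ ((m:ℝ)+1)
              ≤ ENNReal.ofReal (2 * (δ + σ) * θ^k) ^ ((m:ℝ)+1) :=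
                ENNReal.rpow_le_rpow (hdiamk k) he0
            _ = ENNReal.ofReal ((2 * (δ + σ) * θ^k) ^ ((m:ℝ)+1)) :=
                (ENNReal.ofReal_rpow_of_nonneg (by positivity) he0)
            _ = ENNReal.ofReal ((2 * (δ + σ))^(m+1) * (θ^(m+1))^k) := by
                congr 1
                have : ((m:ℝ)+1) = ((m+1 : ℕ) : ℝ) := by push_cast; ring
                rw [this, Real.rpow_natCast, mul_pow, ← pow_mul, ← pow_mul, Nat.mul_comm]
      _ = ENNReal.ofReal (∑' k, (2 * (δ + σ))^(m+1) * (θ^(m+1))^k) := by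
          rw [ENNReal.ofReal_tsum_of_nonneg (fun k => by positivity)
            ((summable_geometric_of_lt_one hq0 hq1).mul_left _)]
      _ ≤ ENNReal.ofReal (2^(m+3) * h * (δ + σ)^m) := by
          apply ENNReal.ofReal_le_ofReal
          rw [tsum_mul_left, tsum_geometric_of_lt_one hq0 hq1]
          have h1 : 1 - θ^(m+1) ≥ β := by
            have : θ^(m+1) ≤ θ := by
              calc θ^(m+1) ≤ θ^1 := pow_le_pow_of_le_one hθ0 hθ1.le (by omega)
                _ = θ := pow_one θ
            rw [hθdef] at this ⊢; linarith
          have h2 : (1 - θ^(m+1))⁻¹ ≤ β⁻¹ := inv_anti₀ hβ0 h1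
          have h3 : β⁻¹ ≤ 4*h/(δ+σ) := by
            rcases le_or_gt ((δ+σ)/h) 1 with hc | hc
            · rw [hβdef, min_eq_left hc, inv_div]
              gcongr
              linarith
            · rw [hβdef, min_eq_right hc.le, inv_one]
              rw [le_div_iff₀ hP]; nlinarith
          calc (2 * (δ + σ))^(m+1) * (1 - θ^(m+1))⁻¹
              ≤ (2 * (δ + σ))^(m+1) * (4*h/(δ+σ)) := by
                apply mul_le_mul_of_nonneg_left (h2.trans h3) (by positivity)
            _ = 2^(m+3) * h * (δ + σ)^m := by
                have hc : (δ+σ) * (4*h/(δ+σ)) = 4*h := by field_simp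
                rw [mul_pow, pow_succ (δ+σ), pow_succ 2, pow_succ 2]
                calc 2^(m+1) * ((δ+σ)^m * (δ+σ)) * (4*h/(δ+σ))
                    = 2^(m+1) * (δ+σ)^m * ((δ+σ) * (4*h/(δ+σ))) := by ring
                  _ = 2^(m+1) * (δ+σ)^m * (4*h) := by rw [hc]
                  _ = 2 ^ m * 2 * 2 * 2 * h * (δ + σ) ^ m := by ring

lemma sigmaChoose (m : ℕ) (δ e r : ℝ) (hδ : 0 ≤ δ) (he : 0 < e) (hr : 0 < r) :
    ∃ σ : ℝ, 0 < σ ∧ σ ≤ r ∧ (δ + σ)^m ≤ δ^m + e := by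
  have hcont : Filter.Tendsto (fun σ : ℝ => (δ + σ)^m) (nhdsWithin 0 (Set.Ioi 0)) (nhds (δ^m)) := by
    have : Filter.Tendsto (fun σ : ℝ => (δ + σ)^m) (nhds 0) (nhds ((δ + 0)^m)) := by
      apply Continuous.tendsto
      continuity
    rw [add_zero] at this
    exact this.mono_left nhdsWithin_le_nhds
  have h1 : ∀ᶠ σ in nhdsWithin (0:ℝ) (Set.Ioi 0), (δ + σ)^m < δ^m + e :=
    hcont.eventually_lt_const (by linarith)
  have h2 : ∀ᶠ σ in nhdsWithin (0:ℝ) (Set.Ioi 0), σ ∈ Set.Ioo 0 r :=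
    Ioo_mem_nhdsGT_of_mem ⟨le_rfl, hr⟩
  obtain ⟨σ, hσ1, hσ2⟩ := (h1.and h2).exists
  exact ⟨σ, hσ2.1, hσ2.2.le, hσ1.le⟩

lemma coneStep (l : ℕ) (hl : 1 ≤ l) {E : Type*} [NormedAddCommGroup E] [NormedSpace ℝ E]
    [MeasurableSpace E] [BorelSpace E]
    (B : Set E) (h : ℝ) (hh : 0 < h) (hB : B ⊆ Metric.closedBall 0 h)
    (hfin : μH[(l : ℝ)] B < ⊤) (ε r : ℝ) (hε : 0 < ε) (hr : 0 < r) (hrh : r ≤ h) :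
    ∃ W : ℕ × ℕ → Set E,
      ({y | ∃ x ∈ B, ∃ t ∈ Set.Icc (0:ℝ) 1, y = t • x} ⊆ ⋃ p, W p) ∧
      (∀ p, EMetric.diam (W p) ≤ ENNReal.ofReal (4 * r)) ∧
      (∑' p, EMetric.diam (W p) ^ ((l:ℝ)+1) ≤
        ENNReal.ofReal (2^(l+3) * h) * (μH[(l:ℝ)] B + ENNReal.ofReal (3*ε))) := by
  -- extract an efficient cover of B at scale r
  have h1 : (⨅ (t : ℕ → Set E) (_ : B ⊆ ⋃ n, t n)
        (_ : ∀ n, EMetric.diam (t n) ≤ ENNReal.ofReal r),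
        ∑' n, ⨆ _ : (t n).Nonempty, EMetric.diam (t n) ^ (l:ℝ)) ≤ μH[(l:ℝ)] B := by
    rw [MeasureTheory.Measure.hausdorffMeasure_apply]
    exact le_iSup₂_of_le (ENNReal.ofReal r) (ENNReal.ofReal_pos.2 hr) le_rfl
  have h2 := h1.trans_lt (ENNReal.lt_add_right hfin.ne
    (by simp [ENNReal.ofReal_pos.2 hε, (ENNReal.ofReal_pos.2 hε).ne'] : ENNReal.ofReal ε ≠ 0))
  obtain ⟨t, h3⟩ := iInf_lt_iff.1 h2
  obtain ⟨hcov, h4⟩ := iInf_lt_iff.1 h3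
  obtain ⟨hdiam, h5⟩ := iInf_lt_iff.1 h4
  set U : ℕ → Set E := fun i => t i ∩ B with hUdef
  have hUB : ∀ i, U i ⊆ Metric.closedBall 0 h := fun i => (Set.inter_subset_right).trans hB
  have hUfin : ∀ i, EMetric.diam (U i) ≤ ENNReal.ofReal r := fun i =>
    le_trans (EMetric.diam_mono Set.inter_subset_left) (hdiam i)
  have hUr : ∀ i, Metric.diam (U i) ≤ r := by
    intro i
    have := ENNReal.toReal_mono ENNReal.ofReal_ne_top (hUfin i)
    rwa [ENNReal.toReal_ofReal hr.le] at this
  -- choose σ i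
  have hσex : ∀ i : ℕ, ∃ σ : ℝ, 0 < σ ∧ σ ≤ r ∧
      (Metric.diam (U i) + σ)^l ≤ (Metric.diam (U i))^l + ε * (1/2)^i :=
    fun i => sigmaChoose l _ _ r Metric.diam_nonneg (by positivity) hr
  choose σ hσ0 hσr hσpow using hσex
  -- apply coneCover to each U i
  have hWex := fun i => coneCover l hl h (σ i) hh (hσ0 i) ((hσr i).trans hrh) (U i) (hUB i)
  choose W hWcov hWdiam hWsum using hWex
  refine ⟨fun p => W p.1 p.2, ?_, ?_, ?_⟩
  · rintro y ⟨x, hx, s, hs, rfl⟩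
    obtain ⟨i, hi⟩ := Set.mem_iUnion.1 (hcov hx)
    have : (s • x) ∈ ⋃ k, W i k := hWcov i ⟨x, ⟨hi, hx⟩, s, hs, rfl⟩
    obtain ⟨k, hk⟩ := Set.mem_iUnion.1 this
    exact Set.mem_iUnion.2 ⟨(i, k), hk⟩
  · rintro ⟨i, k⟩
    refine (hWdiam i k).trans (ENNReal.ofReal_le_ofReal ?_)
    have := hUr i; have := hσr i; linarith
  · rw [show (∑' (p : ℕ × ℕ), EMetric.diam ((fun p : ℕ × ℕ => W p.1 p.2) p) ^ ((l:ℝ) + 1))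
        = ∑' i, ∑' k, EMetric.diam (W i k) ^ ((l:ℝ)+1) from
      ENNReal.tsum_prod (f := fun i k => EMetric.diam (W i k) ^ ((l:ℝ)+1))]
    have key : ∀ i, (∑' k, EMetric.diam (W i k) ^ ((l:ℝ)+1)) ≤
        ENNReal.ofReal (2^(l+3) * h) *
          ((⨆ _ : (t i).Nonempty, EMetric.diam (t i) ^ (l:ℝ)) + ENNReal.ofReal (ε * (1/2)^i)) := by
      intro i
      have hstep : ENNReal.ofReal ((Metric.diam (U i))^l) ≤
          ⨆ _ : (t i).Nonempty, EMetric.diam (t i) ^ (l:ℝ) := by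
        rcases Set.eq_empty_or_nonempty (U i) with he | hne
        · rw [he, Metric.diam_empty, zero_pow (by omega), ENNReal.ofReal_zero]
          exact zero_le
        · have htne : (t i).Nonempty := hne.mono Set.inter_subset_left
          rw [ciSup_pos htne]
          have hfin' : EMetric.diam (U i) ≠ ⊤ := ((hUfin i).trans_lt ENNReal.ofReal_lt_top).ne
          calc ENNReal.ofReal ((Metric.diam (U i))^l)
              = ENNReal.ofReal (Metric.diam (U i)) ^ l := ENNReal.ofReal_pow Metric.diam_nonneg l
            _ = EMetric.diam (U i) ^ l := by
                rw [Metric.diam, ← EMetric.diam, ENNReal.ofReal_toReal hfin']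
            _ ≤ EMetric.diam (t i) ^ l :=
                pow_le_pow_left' (EMetric.diam_mono Set.inter_subset_left) l
            _ = EMetric.diam (t i) ^ (l:ℝ) := (ENNReal.rpow_natCast _ l).symm
      calc (∑' k, EMetric.diam (W i k) ^ ((l:ℝ)+1))
          ≤ ENNReal.ofReal (2^(l+3) * h * (Metric.diam (U i) + σ i)^l) := hWsum i
        _ = ENNReal.ofReal (2^(l+3) * h) * ENNReal.ofReal ((Metric.diam (U i) + σ i)^l) := by
            rw [← ENNReal.ofReal_mul (by positivity)]
        _ ≤ ENNReal.ofReal (2^(l+3) * h) *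
            (ENNReal.ofReal ((Metric.diam (U i))^l) + ENNReal.ofReal (ε * (1/2)^i)) := by
            apply mul_le_mul_right _ _
            rw [← ENNReal.ofReal_add (by positivity) (by positivity)]
            exact ENNReal.ofReal_le_ofReal (hσpow i)
        _ ≤ _ := mul_le_mul_right (add_le_add_left hstep _) _
    calc (∑' i, ∑' k, EMetric.diam (W i k) ^ ((l:ℝ)+1))
        ≤ ∑' i, ENNReal.ofReal (2^(l+3) * h) *
            ((⨆ _ : (t i).Nonempty, EMetric.diam (t i) ^ (l:ℝ)) + ENNReal.ofReal (ε * (1/2)^i)) :=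
          ENNReal.tsum_le_tsum key
      _ = ENNReal.ofReal (2^(l+3) * h) *
            ((∑' i, ⨆ _ : (t i).Nonempty, EMetric.diam (t i) ^ (l:ℝ)) +
              ∑' i, ENNReal.ofReal (ε * (1/2)^i)) := by
          rw [ENNReal.tsum_mul_left, ENNReal.tsum_add]
      _ ≤ ENNReal.ofReal (2^(l+3) * h) * ((μH[(l:ℝ)] B + ENNReal.ofReal ε) + ENNReal.ofReal (2*ε)) := by
          apply mul_le_mul_right
          apply add_le_add h5.le
          have : (∑' i : ℕ, ENNReal.ofReal (ε * (1/2)^i)) = ENNReal.ofReal (∑' i : ℕ, ε * (1/2)^i) := by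
            rw [ENNReal.ofReal_tsum_of_nonneg (fun i => by positivity)
              ((summable_geometric_of_lt_one (by norm_num) (by norm_num)).mul_left ε)]
          rw [this, tsum_mul_left, tsum_geometric_of_lt_one (by norm_num) (by norm_num)]
          apply ENNReal.ofReal_le_ofReal
          linarith
      _ = ENNReal.ofReal (2^(l+3) * h) * (μH[(l:ℝ)] B + ENNReal.ofReal (3*ε)) := by
          rw [add_assoc, ← ENNReal.ofReal_add (by positivity) (by positivity),
            show ε + 2*ε = 3*ε by ring]

/-- Cone area bound: for a compact set `B ⊆ ℝ^{N+1}` contained in the closed ball of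
radius `h` with `ℋ^l(B) < ∞`, the cone `V = {t•x : x ∈ B, t ∈ [0,1]}` satisfies
`ℋ^{l+1}(V) ≤ C · h · ℋ^l(B)`, with `C` depending only on `l` and `N`. -/
theorem stmt7 (N l : ℕ) (hN : 2 ≤ N) (hl : 1 ≤ l) (hlN : l ≤ N - 1) :
    ∃ C : ℝ, 0 < C ∧
      ∀ (B : Set (EuclideanSpace ℝ (Fin (N + 1)))) (h : ℝ), 0 < h →
        IsCompact B → B ⊆ Metric.closedBall 0 h → μH[(l : ℝ)] B < ⊤ →
        μH[(l + 1 : ℝ)] {y | ∃ x ∈ B, ∃ t ∈ Set.Icc (0 : ℝ) 1, y = t • x}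
          ≤ ENNReal.ofReal (C * h) * μH[(l : ℝ)] B := by
  refine ⟨2^(l+3), by positivity, ?_⟩
  intro B h hh _hBc hB hfin
  set V := {y : EuclideanSpace ℝ (Fin (N + 1)) | ∃ x ∈ B, ∃ t ∈ Set.Icc (0 : ℝ) 1, y = t • x}
    with hVdef
  set K := ENNReal.ofReal (2^(l+3) * h) with hKdef
  have hKfin : K ≠ ⊤ := ENNReal.ofReal_ne_top
  -- main estimate for every ε > 0
  have main : ∀ ε : ℝ, 0 < ε →
      μH[(l + 1 : ℝ)] V ≤ K * μH[(l:ℝ)] B + K * ENNReal.ofReal (3*ε) := by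
    intro ε hε
    have hstep : ∀ n : ℕ, ∃ W : ℕ × ℕ → Set (EuclideanSpace ℝ (Fin (N + 1))),
        (V ⊆ ⋃ p, W p) ∧
        (∀ p, EMetric.diam (W p) ≤ ENNReal.ofReal (4 * (h/(n+1)))) ∧
        (∑' p, EMetric.diam (W p) ^ ((l:ℝ)+1) ≤
          K * (μH[(l:ℝ)] B + ENNReal.ofReal (3*ε))) := by
      intro n
      exact coneStep l hl B h hh hB hfin ε (h/(n+1)) hε (by positivity)
        (div_le_self hh.le (by push_cast; linarith [Nat.cast_nonneg (α := ℝ) n]))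
    choose Wn hc hd hs using hstep
    have hr0 : Tendsto (fun n : ℕ => ENNReal.ofReal (4 * (h/(n+1)))) atTop (𝓝 0) := by
      have h2 : Tendsto (fun n : ℕ => ((n:ℝ)+1)) atTop atTop :=
        tendsto_atTop_add_const_right _ 1 tendsto_natCast_atTop_atTop
      have h1 : Tendsto (fun n : ℕ => 4 * (h/((n:ℝ)+1))) atTop (𝓝 0) :=
        ((tendsto_const_nhds (x := 4*h)).div_atTop h2).congr (fun n => by ring)
      have h4 := ENNReal.tendsto_ofReal h1
      rwa [ENNReal.ofReal_zero] at h4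
    have hle := MeasureTheory.Measure.hausdorffMeasure_le_liminf_tsum ((l:ℝ)+1) V
      (fun n : ℕ => ENNReal.ofReal (4 * (h/(n+1)))) hr0 Wn
      (Eventually.of_forall hd) (Eventually.of_forall hc)
    have hle2 : liminf (fun n => ∑' p, EMetric.diam (Wn n p) ^ ((l:ℝ)+1)) atTop
        ≤ K * (μH[(l:ℝ)] B + ENNReal.ofReal (3*ε)) := by
      refine le_trans (liminf_le_liminf (Eventually.of_forall hs)) ?_
      simp [liminf_const]
    calc μH[(l + 1 : ℝ)] V ≤ _ := hle
      _ ≤ K * (μH[(l:ℝ)] B + ENNReal.ofReal (3*ε)) := hle2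
      _ = K * μH[(l:ℝ)] B + K * ENNReal.ofReal (3*ε) := by rw [mul_add]
  -- let ε → 0
  have hfinal : μH[(l + 1 : ℝ)] V ≤ K * μH[(l:ℝ)] B := by
    apply ENNReal.le_of_forall_pos_le_add
    intro ε' hε' hb
    have hden : (0:ℝ) < 3 * (2^(l+3) * h) := by positivity
    set ε : ℝ := (ε' : ℝ) / (3 * (2^(l+3) * h)) with hεdef
    have hε : 0 < ε := by positivity
    have hKε : K * ENNReal.ofReal (3*ε) = (ε' : ℝ≥0∞) := by
      rw [hKdef, ← ENNReal.ofReal_mul (by positivity)]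
      rw [show (2^(l+3) * h) * (3*ε) = (ε' : ℝ) by rw [hεdef]; field_simp]
      exact ENNReal.ofReal_coe_nnreal
    calc μH[(l + 1 : ℝ)] V ≤ K * μH[(l:ℝ)] B + K * ENNReal.ofReal (3*ε) := main ε hε
      _ = K * μH[(l:ℝ)] B + ε' := by rw [hKε]
  exact hfinal
end

section
/- Tilted truncated cone area bound: let B ⊂ ℝ^N be compact with ℋ^l(B) < ∞ and sup_{x∈B}|x| ≤ h, let ε > 0 and 0 < r ≤ inf_{x∈B}|x|, and define D̂ = {(t·x, (1−t)·ε) ∈ ℝ^N × ℝ : x ∈ B, r²/|x|² ≤ t ≤ 1}. Then ℋ^{l+1}(D̂) ≤ C·(h + ε)·ℋ^l(B) for a constant C depending only on l and N. -/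
open Metric MeasureTheory

section AuxStmt16

open Set ENNReal NNReal Filter


variable {X : Type*} [EMetricSpace X] [MeasurableSpace X] [BorelSpace X]

lemma exists_cover (d : ℝ) (hd : 0 < d) (s : Set X) (hs : μH[d] s ≠ ⊤)
    (η : ℝ≥0∞) (hη : η ≠ 0) (ρ : ℝ≥0∞) (hρ : 0 < ρ) :
    ∃ t : ℕ → Set X, s ⊆ ⋃ i, t i ∧ (∀ i, EMetric.diam (t i) ≤ ρ) ∧
      ∑' i, EMetric.diam (t i) ^ d ≤ μH[d] s + η := by
  have key : (⨅ (t : ℕ → Set X) (_ : s ⊆ ⋃ n, t n) (_ : ∀ n, EMetric.diam (t n) ≤ ρ),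
      ∑' n, ⨆ _ : (t n).Nonempty, EMetric.diam (t n) ^ d) ≤ μH[d] s := by
    rw [MeasureTheory.Measure.hausdorffMeasure_apply]
    exact le_iSup₂ (f := fun r (_ : 0 < r) =>
      ⨅ (t : ℕ → Set X) (_ : s ⊆ ⋃ n, t n) (_ : ∀ n, EMetric.diam (t n) ≤ r),
        ∑' n, ⨆ _ : (t n).Nonempty, EMetric.diam (t n) ^ d) ρ hρ
  have hlt : (⨅ (t : ℕ → Set X) (_ : s ⊆ ⋃ n, t n) (_ : ∀ n, EMetric.diam (t n) ≤ ρ),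
      ∑' n, ⨆ _ : (t n).Nonempty, EMetric.diam (t n) ^ d) < μH[d] s + η :=
    key.trans_lt (ENNReal.lt_add_right hs hη)
  rw [iInf_lt_iff] at hlt
  obtain ⟨t, ht⟩ := hlt
  rw [iInf_lt_iff] at ht
  obtain ⟨h1, ht⟩ := ht
  rw [iInf_lt_iff] at ht
  obtain ⟨h2, ht⟩ := ht
  refine ⟨t, h1, h2, le_trans ?_ ht.le⟩
  refine ENNReal.tsum_le_tsum fun n => ?_
  rcases eq_empty_or_nonempty (t n) with he | hne
  · simp [he, EMetric.diam, EMetric.diam_empty, ENNReal.zero_rpow_of_pos hd]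
  · exact le_iSup (fun _ : (t n).Nonempty => EMetric.diam (t n) ^ d) hne

lemma ediam_prod_le {X Y : Type*} [PseudoEMetricSpace X] [PseudoEMetricSpace Y]
    (A : Set X) (B : Set Y) :
    EMetric.diam (A ×ˢ B) ≤ max (EMetric.diam A) (EMetric.diam B) :=
  EMetric.diam_le fun p hp q hq => by
    rw [Prod.edist_eq]
    exact max_le_max (EMetric.edist_le_diam_of_mem hp.1 hq.1)
      (EMetric.edist_le_diam_of_mem hp.2 hq.2)

lemma add_pow_le' (a b : ℝ≥0∞) (d : ℕ) : (a + b) ^ d ≤ 2 ^ d * (a ^ d + b ^ d) := by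
  calc (a + b) ^ d ≤ (2 * max a b) ^ d := by
        refine pow_le_pow_left' ?_ d
        rw [two_mul]
        exact add_le_add (le_max_left a b) (le_max_right a b)
    _ = 2 ^ d * (max a b) ^ d := mul_pow 2 (max a b) d
    _ ≤ 2 ^ d * (a ^ d + b ^ d) := by
        gcongr
        rcases max_cases a b with ⟨h, _⟩ | ⟨h, _⟩ <;> rw [h]
        · exact le_add_right le_rfl
        · exact le_add_left le_rfl

variable {X : Type*} [MetricSpace X] [MeasurableSpace X] [BorelSpace X]

lemma hausdorff_prod_Icc (d : ℕ) (hd : 1 ≤ d) (s : Set X) (hs : μH[(d : ℝ)] s ≠ ⊤)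
    (M : ℝ) (hM : 0 < M) :
    μH[(d : ℝ) + 1] (s ×ˢ Icc (0 : ℝ) M) ≤ 2 ^ (d + 1) * ENNReal.ofReal M * μH[(d : ℝ)] s := by
  set μ := μH[(d : ℝ)] s with hμ
  set η : ℕ → ℝ := fun n => ((n : ℝ) + 1)⁻¹ with hηdef
  have hηpos : ∀ n, 0 < η n := fun n => by positivity
  have hcov : ∀ n : ℕ, ∃ t : ℕ → Set X, s ⊆ ⋃ i, t i ∧
      (∀ i, EMetric.diam (t i) ≤ ENNReal.ofReal (η n)) ∧
      ∑' i, EMetric.diam (t i) ^ (d : ℝ) ≤ μ + ENNReal.ofReal (η n) := fun n =>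
    exists_cover (d : ℝ) (by positivity) s hs _
      (ENNReal.ofReal_pos.2 (hηpos n)).ne' _ (ENNReal.ofReal_pos.2 (hηpos n))
  choose t ht1 ht2 ht3 using hcov
  set δ : ℕ → ℕ → ℝ := fun n i => (EMetric.diam (t n i)).toReal + η n * (2⁻¹ : ℝ) ^ i with hδdef
  have hδpos : ∀ n i, 0 < δ n i := fun n i =>
    add_pos_of_nonneg_of_pos ENNReal.toReal_nonneg (by positivity)
  have hdiamfin : ∀ n i, EMetric.diam (t n i) ≠ ⊤ := fun n i =>
    ((ht2 n i).trans_lt ENNReal.ofReal_lt_top).ne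
  have hdiamle : ∀ n i, EMetric.diam (t n i) ≤ ENNReal.ofReal (δ n i) := fun n i => by
    rw [hδdef]
    calc EMetric.diam (t n i) = ENNReal.ofReal (EMetric.diam (t n i)).toReal :=
          (ENNReal.ofReal_toReal (hdiamfin n i)).symm
      _ ≤ _ := ENNReal.ofReal_le_ofReal (by nlinarith [hηpos n, pow_pos (by norm_num : (0:ℝ) < 2⁻¹) i])
  have hδle : ∀ n i, δ n i ≤ 2 * η n := fun n i => by
    have h1 : (EMetric.diam (t n i)).toReal ≤ η n :=
      ENNReal.toReal_le_of_le_ofReal (hηpos n).le (ht2 n i)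
    have h2 : η n * (2⁻¹ : ℝ) ^ i ≤ η n := by
      have : (2⁻¹ : ℝ) ^ i ≤ 1 := pow_le_one₀ (by norm_num) (by norm_num)
      nlinarith [hηpos n]
    rw [hδdef]; dsimp only; linarith
  set U : ∀ _ : ℕ, ℕ × ℕ → Set (X × ℝ) := fun n p =>
    if (p.2 : ℝ) * δ n p.1 ≤ M then
      (t n p.1) ×ˢ Icc ((p.2 : ℝ) * δ n p.1) (((p.2 : ℝ) + 1) * δ n p.1) else ∅ with hUdef
  have hUdiam : ∀ n p, EMetric.diam (U n p) ≤ ENNReal.ofReal (δ n p.1) := by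
    intro n p
    rw [hUdef]
    dsimp only
    split_ifs with hc
    · refine (ediam_prod_le _ _).trans (max_le (hdiamle n p.1) ?_)
      rw [EMetric.diam, Real.ediam_Icc]
      exact ENNReal.ofReal_le_ofReal (by ring_nf; nlinarith [hδpos n p.1])
    · simp [EMetric.diam]
  have hrt : Tendsto (fun n => ENNReal.ofReal (2 * η n)) atTop (nhds 0) := by
    rw [← ENNReal.ofReal_zero]
    refine ENNReal.tendsto_ofReal ?_
    have : Tendsto η atTop (nhds 0) := tendsto_one_div_add_atTop_nhds_zero_nat.congr (by
      intro n; rw [hηdef]; simp [one_div])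
    simpa using this.const_mul 2
  have hcover : ∀ n : ℕ, (s ×ˢ Icc (0:ℝ) M) ⊆ ⋃ p, U n p := by
    intro n q hq
    obtain ⟨hx, hu⟩ := hq
    obtain ⟨_, ⟨i, rfl⟩, hxi⟩ := ht1 n hx
    set j := ⌊q.2 / δ n i⌋₊ with hj
    have hδp := hδpos n i
    have hj1 : (j : ℝ) * δ n i ≤ q.2 := by
      rw [hj]
      have := Nat.floor_le (div_nonneg hu.1 hδp.le)
      calc (⌊q.2 / δ n i⌋₊ : ℝ) * δ n i ≤ (q.2 / δ n i) * δ n i :=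
            mul_le_mul_of_nonneg_right this hδp.le
        _ = q.2 := div_mul_cancel₀ _ hδp.ne'
    have hj2 : q.2 ≤ ((j : ℝ) + 1) * δ n i := by
      have := (Nat.lt_floor_add_one (q.2 / δ n i)).le
      calc q.2 = (q.2 / δ n i) * δ n i := (div_mul_cancel₀ _ hδp.ne').symm
        _ ≤ ((j : ℝ) + 1) * δ n i := mul_le_mul_of_nonneg_right this hδp.le
    refine mem_iUnion.2 ⟨(i, j), ?_⟩
    rw [hUdef]
    dsimp only
    rw [if_pos (hj1.trans hu.2)]
    exact ⟨hxi, hj1, hj2⟩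
  refine le_trans (MeasureTheory.Measure.hausdorffMeasure_le_liminf_tsum ((d : ℝ) + 1)
    (s ×ˢ Icc (0:ℝ) M) (fun n => ENNReal.ofReal (2 * η n)) hrt (U ·)
    (Eventually.of_forall fun n i => (hUdiam n i).trans
      (ENNReal.ofReal_le_ofReal (hδle n i.1)))
    (Eventually.of_forall hcover)) ?_
  have hpow : ∀ a : ℝ≥0∞, a ^ ((d : ℝ) + 1) = a ^ (d + 1) := fun a => by
    rw [← ENNReal.rpow_natCast a (d + 1)]; norm_num
  set B : ℕ → ℝ≥0∞ := fun n => ENNReal.ofReal (η n) + ENNReal.ofReal (η n) ^ d * 2 with hB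
  set c : ℝ≥0∞ := ENNReal.ofReal (2 * M) * 2 ^ d with hc
  have hgeo : ∑' i : ℕ, (ENNReal.ofReal 2⁻¹) ^ i = 2 := by
    have h2 : (ENNReal.ofReal 2⁻¹) = 2⁻¹ := by
      rw [ENNReal.ofReal_inv_of_pos (by norm_num)]
      norm_num
    rw [h2, ENNReal.tsum_geometric, ENNReal.one_sub_inv_two, inv_inv]
  have hSle : ∀ n : ℕ, 2 * η n ≤ M →
      (∑' p : ℕ × ℕ, EMetric.diam (U n p) ^ ((d : ℝ) + 1)) ≤ c * (μ + B n) := by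
    intro n hn
    have key : ∀ i : ℕ, (∑' j : ℕ, EMetric.diam (U n (i, j)) ^ ((d : ℝ) + 1)) ≤
        ENNReal.ofReal (2 * M) * ENNReal.ofReal (δ n i) ^ d := by
      intro i
      have hδp := hδpos n i
      set K := ⌊M / δ n i⌋₊ + 1 with hK
      have hzero : ∀ j ∉ Finset.range K, EMetric.diam (U n (i, j)) ^ ((d : ℝ) + 1) = 0 := by
        intro j hj
        rw [Finset.mem_range, not_lt, hK] at hj
        have hcond : ¬ ((j : ℝ) * δ n i ≤ M) := by
          intro hcon
          have : (j : ℝ) ≤ M / δ n i := (le_div_iff₀ hδp).2 hcon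
          have h2 : j ≤ ⌊M / δ n i⌋₊ := Nat.le_floor this
          omega
        have : U n (i, j) = ∅ := by rw [hUdef]; exact if_neg hcond
        rw [this]
        simp [EMetric.diam, EMetric.diam_empty, ENNReal.zero_rpow_of_pos (by positivity : (0:ℝ) < (d:ℝ)+1)]
      rw [tsum_eq_sum hzero]
      have hterm : ∀ j ∈ Finset.range K, EMetric.diam (U n (i, j)) ^ ((d : ℝ) + 1) ≤
          ENNReal.ofReal (δ n i) ^ (d + 1) := fun j _ => by
        rw [hpow]
        exact pow_le_pow_left' (hUdiam n (i, j)) _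
      calc ∑ j ∈ Finset.range K, EMetric.diam (U n (i, j)) ^ ((d : ℝ) + 1)
          ≤ ∑ _j ∈ Finset.range K, ENNReal.ofReal (δ n i) ^ (d + 1) :=
            Finset.sum_le_sum hterm
        _ = (K : ℝ≥0∞) * (ENNReal.ofReal (δ n i) * ENNReal.ofReal (δ n i) ^ d) := by
            rw [Finset.sum_const, Finset.card_range, nsmul_eq_mul, pow_succ]
            ring
        _ = ((K : ℝ≥0∞) * ENNReal.ofReal (δ n i)) * ENNReal.ofReal (δ n i) ^ d := by ring
        _ ≤ ENNReal.ofReal (2 * M) * ENNReal.ofReal (δ n i) ^ d := by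
            gcongr
            have : (K : ℝ≥0∞) * ENNReal.ofReal (δ n i) = ENNReal.ofReal ((K : ℝ) * δ n i) := by
              rw [ENNReal.ofReal_mul (by positivity)]
              congr 1
              rw [ENNReal.ofReal_natCast]
            rw [this]
            refine ENNReal.ofReal_le_ofReal ?_
            have h1 : (K : ℝ) * δ n i ≤ M + δ n i := by
              rw [hK]
              push_cast
              have := Nat.floor_le (le_of_lt (div_pos hM hδp))
              calc ((⌊M / δ n i⌋₊ : ℝ) + 1) * δ n i
                  ≤ (M / δ n i + 1) * δ n i := by
                    exact mul_le_mul_of_nonneg_right (by linarith) hδp.le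
                _ = M + δ n i := by field_simp
            have h2 : δ n i ≤ M := (hδle n i).trans hn
            linarith
    have hinner : (∑' i : ℕ, ENNReal.ofReal (δ n i) ^ d) ≤ 2 ^ d * (μ + B n) := by
      have hsplit : ∀ i : ℕ, ENNReal.ofReal (δ n i) =
          EMetric.diam (t n i) + ENNReal.ofReal (η n) * (ENNReal.ofReal 2⁻¹) ^ i := by
        intro i
        rw [hδdef]
        dsimp only
        rw [ENNReal.ofReal_add ENNReal.toReal_nonneg (by positivity),
          ENNReal.ofReal_toReal (hdiamfin n i), ENNReal.ofReal_mul (hηpos n).le,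
          ENNReal.ofReal_pow (by norm_num)]
      calc (∑' i : ℕ, ENNReal.ofReal (δ n i) ^ d)
          ≤ ∑' i : ℕ, 2 ^ d * (EMetric.diam (t n i) ^ d +
              (ENNReal.ofReal (η n) * (ENNReal.ofReal 2⁻¹) ^ i) ^ d) := by
            refine ENNReal.tsum_le_tsum fun i => ?_
            rw [hsplit i]
            exact add_pow_le' _ _ d
        _ = 2 ^ d * ((∑' i : ℕ, EMetric.diam (t n i) ^ d) +
              ∑' i : ℕ, (ENNReal.ofReal (η n) * (ENNReal.ofReal 2⁻¹) ^ i) ^ d) := by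
            rw [ENNReal.tsum_mul_left, ENNReal.tsum_add]
        _ ≤ 2 ^ d * ((μ + ENNReal.ofReal (η n)) + ENNReal.ofReal (η n) ^ d * 2) := by
            refine mul_le_mul_right (add_le_add ?_ ?_) _
            · calc (∑' i : ℕ, EMetric.diam (t n i) ^ d)
                  = ∑' i : ℕ, EMetric.diam (t n i) ^ (d : ℝ) := by
                    refine tsum_congr fun i => ?_
                    rw [ENNReal.rpow_natCast]
                _ ≤ μ + ENNReal.ofReal (η n) := ht3 n
            · calc (∑' i : ℕ, (ENNReal.ofReal (η n) * (ENNReal.ofReal 2⁻¹) ^ i) ^ d)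
                  = ∑' i : ℕ, ENNReal.ofReal (η n) ^ d * ((ENNReal.ofReal 2⁻¹) ^ i) ^ d := by
                    refine tsum_congr fun i => mul_pow _ _ _
                _ ≤ ∑' i : ℕ, ENNReal.ofReal (η n) ^ d * (ENNReal.ofReal 2⁻¹) ^ i := by
                    refine ENNReal.tsum_le_tsum fun i => ?_
                    refine mul_le_mul_right ?_ _
                    have hle1 : (ENNReal.ofReal 2⁻¹) ^ i ≤ 1 :=
                      pow_le_one' (ENNReal.ofReal_le_one.2 (by norm_num)) i
                    calc ((ENNReal.ofReal 2⁻¹) ^ i) ^ d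
                        ≤ ((ENNReal.ofReal 2⁻¹) ^ i) ^ 1 :=
                          pow_le_pow_of_le_one zero_le hle1 hd
                      _ = (ENNReal.ofReal 2⁻¹) ^ i := pow_one _
                _ = ENNReal.ofReal (η n) ^ d * 2 := by rw [ENNReal.tsum_mul_left, hgeo]
        _ = 2 ^ d * (μ + B n) := by rw [hB]; ring
    calc (∑' p : ℕ × ℕ, EMetric.diam (U n p) ^ ((d : ℝ) + 1))
        = ∑' i : ℕ, ∑' j : ℕ, EMetric.diam (U n (i, j)) ^ ((d : ℝ) + 1) := by
          rw [← ENNReal.tsum_prod]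
      _ ≤ ∑' i : ℕ, ENNReal.ofReal (2 * M) * ENNReal.ofReal (δ n i) ^ d :=
          ENNReal.tsum_le_tsum key
      _ = ENNReal.ofReal (2 * M) * ∑' i : ℕ, ENNReal.ofReal (δ n i) ^ d :=
          ENNReal.tsum_mul_left
      _ ≤ ENNReal.ofReal (2 * M) * (2 ^ d * (μ + B n)) := by gcongr
      _ = c * (μ + B n) := by rw [hc]; ring
  have hηlim : Tendsto (fun n => 2 * η n) atTop (nhds 0) := by
    have : Tendsto η atTop (nhds 0) := tendsto_one_div_add_atTop_nhds_zero_nat.congr (by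
      intro n; rw [hηdef]; simp [one_div])
    simpa using this.const_mul 2
  have hev : ∀ᶠ n in atTop, (∑' p : ℕ × ℕ, EMetric.diam (U n p) ^ ((d : ℝ) + 1)) ≤
      c * (μ + B n) := by
    filter_upwards [hηlim.eventually_lt_const hM] with n hn
    exact hSle n hn.le
  refine le_trans (liminf_le_liminf hev) ?_
  have hBlim : Tendsto B atTop (nhds 0) := by
    have h1 : Tendsto (fun n => ENNReal.ofReal (η n)) atTop (nhds 0) := by
      rw [← ENNReal.ofReal_zero]
      refine ENNReal.tendsto_ofReal ?_
      exact tendsto_one_div_add_atTop_nhds_zero_nat.congr (by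
        intro n; rw [hηdef]; simp [one_div])
    have h2 : Tendsto (fun n => ENNReal.ofReal (η n) ^ d * 2) atTop (nhds 0) := by
      have hp : Tendsto (fun n => ENNReal.ofReal (η n) ^ d) atTop (nhds 0) := by
        have := ((ENNReal.continuous_pow d).tendsto 0).comp h1
        simpa [Function.comp_def, zero_pow (by omega : d ≠ 0)] using this
      have := ENNReal.Tendsto.mul_const hp (Or.inr (by norm_num : (2:ℝ≥0∞) ≠ ⊤))
      simpa using this
    have := h1.add h2
    simpa using this
  have hclim : Tendsto (fun n => c * (μ + B n)) atTop (nhds (c * μ)) := by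
    have h1 : Tendsto (fun n => μ + B n) atTop (nhds μ) := by
      have := (tendsto_const_nhds (x := μ) (f := atTop)).add hBlim
      simpa using this
    refine ENNReal.Tendsto.const_mul (a := c) h1 (Or.inr ?_)
    rw [hc]
    exact ENNReal.mul_ne_top ENNReal.ofReal_ne_top (ENNReal.pow_ne_top (by norm_num))
  rw [hclim.liminf_eq]
  have : c = 2 ^ (d + 1) * ENNReal.ofReal M := by
    rw [hc, ENNReal.ofReal_mul (by norm_num), pow_succ]
    have : ENNReal.ofReal 2 = 2 := by norm_num
    rw [this]
    ring
  rw [this, mul_assoc]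


end AuxStmt16

/-- Tilted truncated cone area bound: for compact `B ⊆ ℝ^N` with `ℋ^l(B) < ∞`,
`0 ∉ B`, `sup_{x∈B} ‖x‖ ≤ h`, `ε > 0`, and `0 < r ≤ ‖x‖` on `B`, the set
`D̂ = {(t•x, (1-t)ε) : x ∈ B, r²/‖x‖² ≤ t ≤ 1}` satisfies
`ℋ^{l+1}(D̂) ≤ C (h + ε) ℋ^l(B)` for a constant `C` depending only on `l`, `N`. -/
theorem stmt16 (N l : ℕ) (hN : 2 ≤ N) (hl : 1 ≤ l) (hlN : l ≤ N - 1) :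
    ∃ C : ℝ, 0 < C ∧
      ∀ (B : Set (EuclideanSpace ℝ (Fin N))) (h ε r : ℝ),
        IsCompact B → (0 : EuclideanSpace ℝ (Fin N)) ∉ B →
        μH[(l : ℝ)] B < ⊤ → (∀ x ∈ B, ‖x‖ ≤ h) → 0 < ε → 0 < r →
        (∀ x ∈ B, r ≤ ‖x‖) →
        μH[(l + 1 : ℝ)]
          {y : EuclideanSpace ℝ (Fin N) × ℝ |
            ∃ x ∈ B, ∃ t ∈ Set.Icc (r ^ 2 / ‖x‖ ^ 2) (1 : ℝ),
              y = (t • x, (1 - t) * ε)}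
          ≤ ENNReal.ofReal (C * (h + ε)) * μH[(l : ℝ)] B := by
  refine ⟨4 ^ (l + 1), by positivity, ?_⟩
  intro B h ε r hBc hB0 hBfin hBh hε hr hBr
  set D := {y : EuclideanSpace ℝ (Fin N) × ℝ |
      ∃ x ∈ B, ∃ t ∈ Set.Icc (r ^ 2 / ‖x‖ ^ 2) (1 : ℝ), y = (t • x, (1 - t) * ε)} with hD
  rcases Set.eq_empty_or_nonempty B with rfl | ⟨x₀, hx₀⟩
  · have hDe : D = ∅ := by
      rw [hD]; ext y; simp
    rw [hDe]
    simp
  have hrh : r ≤ h := (hBr x₀ hx₀).trans (hBh x₀ hx₀)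
  have hh : 0 < h := lt_of_lt_of_le hr hrh
  set M := h + ε with hMdef
  have hMpos : 0 < M := by positivity
  set g : EuclideanSpace ℝ (Fin N) × ℝ → EuclideanSpace ℝ (Fin N) × ℝ :=
    fun p => ((p.2 / M) • p.1, (1 - p.2 / M) * ε) with hg
  have hsub : D ⊆ g '' (B ×ˢ Set.Icc (0 : ℝ) M) := by
    rintro y ⟨x, hx, t, ht, rfl⟩
    have ht0 : 0 ≤ t := le_trans (by positivity) ht.1
    refine ⟨(x, t * M), ⟨hx, mul_nonneg ht0 hMpos.le, ?_⟩, ?_⟩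
    · calc t * M ≤ 1 * M := mul_le_mul_of_nonneg_right ht.2 hMpos.le
        _ = M := one_mul M
    · rw [hg]
      dsimp only
      rw [mul_div_cancel_right₀ t hMpos.ne']
  have hlip : LipschitzOnWith 2 g (B ×ˢ Set.Icc (0 : ℝ) M) := by
    rw [lipschitzOnWith_iff_dist_le_mul]
    rintro ⟨x₁, s₁⟩ ⟨hx₁, hs₁⟩ ⟨x₂, s₂⟩ ⟨hx₂, hs₂⟩
    rw [Prod.dist_eq]
    have hds : dist s₁ s₂ ≤ dist (x₁, s₁) (x₂, s₂) := by
      rw [Prod.dist_eq]; exact le_max_right _ _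
    have hdx : dist x₁ x₂ ≤ dist (x₁, s₁) (x₂, s₂) := by
      rw [Prod.dist_eq]; exact le_max_left _ _
    have hdnn : (0 : ℝ) ≤ dist (x₁, s₁) (x₂, s₂) := dist_nonneg
    refine max_le ?_ ?_
    · rw [hg]
      dsimp only
      rw [dist_eq_norm]
      have heq : (s₁ / M) • x₁ - (s₂ / M) • x₂ =
          (s₁ / M) • (x₁ - x₂) + ((s₁ - s₂) / M) • x₂ := by
        match_scalars <;> ring
      rw [heq]
      have hb1 : ‖(s₁ / M) • (x₁ - x₂)‖ ≤ dist x₁ x₂ := by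
        rw [norm_smul, Real.norm_eq_abs, abs_div, abs_of_pos hMpos,
          abs_of_nonneg hs₁.1, ← dist_eq_norm]
        have : s₁ / M ≤ 1 := (div_le_one hMpos).2 hs₁.2
        nlinarith [dist_nonneg (x := x₁) (y := x₂), div_nonneg hs₁.1 hMpos.le]
      have hb2 : ‖((s₁ - s₂) / M) • x₂‖ ≤ dist s₁ s₂ := by
        rw [norm_smul, Real.norm_eq_abs, abs_div, abs_of_pos hMpos]
        have hx2h : ‖x₂‖ ≤ M := (hBh x₂ hx₂).trans (by rw [hMdef]; linarith)
        have : |s₁ - s₂| / M * ‖x₂‖ ≤ |s₁ - s₂| / M * M :=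
          mul_le_mul_of_nonneg_left hx2h (by positivity)
        rw [Real.dist_eq]
        calc |s₁ - s₂| / M * ‖x₂‖ ≤ |s₁ - s₂| / M * M := this
          _ = |s₁ - s₂| := div_mul_cancel₀ _ hMpos.ne'
      calc ‖(s₁ / M) • (x₁ - x₂) + ((s₁ - s₂) / M) • x₂‖
          ≤ ‖(s₁ / M) • (x₁ - x₂)‖ + ‖((s₁ - s₂) / M) • x₂‖ := norm_add_le _ _
        _ ≤ dist x₁ x₂ + dist s₁ s₂ := add_le_add hb1 hb2
        _ ≤ 2 * dist (x₁, s₁) (x₂, s₂) := by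
            push_cast
            linarith
    · rw [hg]
      dsimp only
      rw [Real.dist_eq]
      have heq : (1 - s₁ / M) * ε - (1 - s₂ / M) * ε = ((s₂ - s₁) / M) * ε := by ring
      rw [heq, abs_mul, abs_div, abs_of_pos hMpos, abs_of_pos hε]
      have hεM : ε ≤ M := by rw [hMdef]; linarith
      have h1 : |s₂ - s₁| / M * ε ≤ |s₂ - s₁| / M * M :=
        mul_le_mul_of_nonneg_left hεM (by positivity)
      have h2 : |s₂ - s₁| / M * M = |s₂ - s₁| := div_mul_cancel₀ _ hMpos.ne'
      have h3 : |s₂ - s₁| = dist s₁ s₂ := by rw [Real.dist_eq, abs_sub_comm]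
      push_cast
      nlinarith [hds, hdnn]
  have hpow2 : ((2 : NNReal) : ENNReal) ^ ((l : ℝ) + 1) = (2 : ENNReal) ^ (l + 1) := by
    have h1 : ((l : ℝ) + 1) = ((l + 1 : ℕ) : ℝ) := by push_cast; ring
    rw [h1, ENNReal.rpow_natCast, ENNReal.coe_ofNat]
  have hexp : ((l : ℝ) + 1) = (l + 1 : ℝ) := by push_cast; ring
  calc μH[(l + 1 : ℝ)] D ≤ μH[(l + 1 : ℝ)] (g '' (B ×ˢ Set.Icc (0 : ℝ) M)) :=
        measure_mono hsub
    _ ≤ ((2 : NNReal) : ENNReal) ^ ((l : ℝ) + 1) * μH[(l : ℝ) + 1] (B ×ˢ Set.Icc (0 : ℝ) M) := by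
        rw [← hexp]
        exact hlip.hausdorffMeasure_image_le (by positivity)
    _ ≤ (2 : ENNReal) ^ (l + 1) * ((2 : ENNReal) ^ (l + 1) * ENNReal.ofReal M * μH[(l : ℝ)] B) := by
        rw [hpow2]
        exact mul_le_mul_right (hausdorff_prod_Icc l hl B hBfin.ne M hMpos) _
    _ = ENNReal.ofReal ((4 : ℝ) ^ (l + 1) * M) * μH[(l : ℝ)] B := by
        rw [ENNReal.ofReal_mul (by positivity), ENNReal.ofReal_pow (by norm_num)]
        have h4 : ENNReal.ofReal (4 : ℝ) = 4 := by norm_num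
        have h2 : (2 : ENNReal) ^ (l + 1) * (2 : ENNReal) ^ (l + 1) = 4 ^ (l + 1) := by
          rw [← mul_pow]; norm_num
        rw [h4, ← mul_assoc, ← mul_assoc, h2]
end
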